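/- Fix an instruction field I, an odometer h, and V ⊆ ℤ^d. If η ≤ η̄ pointwise (in the order of ℕ_𝔰 where 0 < 𝔰 < 1 < 2 < ⋯), and α is an acceptable sequence of topplings for (η̄,h) such that Φ_α(η̄,h) is stable in V, then m_{V,η,h}(x) ≤ m_α(x) for every x ∈ ℤ^d. -/

import Mathlib

open scoped ENNReal NNReal
open MeasureTheory

namespace ARW

/-- A site of the lattice `ℤ^d`. -/
abbrev Site (d : ℕ) := Fin d → ℤ

/-- The set `ℕ_𝔰 = ℕ ∪ {𝔰}` of possible values at a site. -/
inductive NS where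
  | nat : ℕ → NS
  | s : NS
deriving DecidableEq

/-- Rank function realizing the total order `0 < 𝔰 < 1 < 2 < ⋯`
(`𝔰` is placed at `1/2`). -/
def NS.val : NS → ℚ
  | .nat n => n
  | .s => 1/2

instance : LE NS := ⟨fun a b => a.val ≤ b.val⟩
instance : LT NS := ⟨fun a b => a.val < b.val⟩

/-- Remove one particle: `n − 1`, with `𝔰 − 1 = 0`. -/
def NS.dec : NS → NS
  | .nat 0 => .nat 0
  | .nat (n+1) => .nat n
  | .s => .nat 0

/-- Add one particle: `n + 1`, with `𝔰 + 1 = 2`. -/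
def NS.inc : NS → NS
  | .nat n => .nat (n+1)
  | .s => .nat 2

/-- Multiplication by `𝔰`: `n·𝔰 = n` for `n ≥ 2`, `1·𝔰 = 𝔰`, `𝔰·𝔰 = 𝔰`. -/
def NS.mulS : NS → NS
  | .nat 0 => .nat 0
  | .nat 1 => .s
  | .nat (n+2) => .nat (n+2)
  | .s => .s

/-- A configuration of the ARW. -/
abbrev Config (d : ℕ) := Site d → NS

/-- An odometer. -/
abbrev Odom (d : ℕ) := Site d → ℕ

/-- An instruction: either a sleep instruction `τ_{x𝔰}`, or a move instruction
`τ_{xy}` recorded through the displacement `z = y − x ≠ 0`. -/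
inductive Instr (d : ℕ) where
  | sleep : Instr d
  | move : (z : Site d) → z ≠ 0 → Instr d

/-- Applying an instruction at site `x` to a configuration: `τ_{x𝔰}` replaces `η(x)` by
`η(x)·𝔰`; `τ_{xy}` (with `y = x + z`) decreases `η(x)` by one and increases `η(y)` by one. -/
def applyInstr {d : ℕ} (x : Site d) (ι : Instr d) (η : Config d) : Config d :=
  match ι with
  | .sleep => Function.update η x (η x).mulS
  | .move z _ => fun w =>
      if w = x then (η x).dec
      else if w = x + z then (η (x + z)).inc
      else η w

/-- A field of instructions `(τ^{x,j})_{x ∈ ℤ^d, j ∈ ℕ}`. -/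
abbrev InstrField (d : ℕ) := Site d → ℕ → Instr d

/-- Toppling site `x`: `Φ_x(η,h) = (τ^{x,h(x)+1} η, h + δ_x)`. -/
def topple {d : ℕ} (I : InstrField d) (x : Site d) (s : Config d × Odom d) :
    Config d × Odom d :=
  (applyInstr x (I x (s.2 x + 1)) s.1, Function.update s.2 x (s.2 x + 1))

/-- `Φ_α` for a finite sequence `α = (x_1, …, x_k)` of sites (`x_1` acts first). -/
def toppleSeq {d : ℕ} (I : InstrField d) :
    List (Site d) → Config d × Odom d → Config d × Odom d
  | [], s => s
  | x :: α, s => toppleSeq I α (topple I x s)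

/-- Site `x` is unstable for `η` if `η(x) ≥ 1`. -/
def Unstable {d : ℕ} (η : Config d) (x : Site d) : Prop := NS.nat 1 ≤ η x

/-- Toppling `x` is acceptable for `η` if `η(x) ≠ 0`. -/
def AcceptableAt {d : ℕ} (η : Config d) (x : Site d) : Prop := η x ≠ NS.nat 0

/-- `α` is a legal sequence of topplings for `(η,h)`: each successive toppling is legal. -/
inductive LegalSeq {d : ℕ} (I : InstrField d) : List (Site d) → Config d × Odom d → Prop
  | nil (s : Config d × Odom d) : LegalSeq I [] s
  | cons {x : Site d} {α : List (Site d)} {s : Config d × Odom d} :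
      Unstable s.1 x → LegalSeq I α (topple I x s) → LegalSeq I (x :: α) s

/-- `α` is an acceptable sequence of topplings for `(η,h)`. -/
inductive AcceptableSeq {d : ℕ} (I : InstrField d) : List (Site d) → Config d × Odom d → Prop
  | nil (s : Config d × Odom d) : AcceptableSeq I [] s
  | cons {x : Site d} {α : List (Site d)} {s : Config d × Odom d} :
      AcceptableAt s.1 x → AcceptableSeq I α (topple I x s) → AcceptableSeq I (x :: α) s

/-- `η` is stable in `V`: every `x ∈ V` is stable for `η`. -/
def StableIn {d : ℕ} (η : Config d) (V : Set (Site d)) : Prop :=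
  ∀ x ∈ V, ¬ Unstable η x

/-- `m_{V,η,h}(x) = sup { m_β(x) : β ⊆ V legal for (η,h) }`, as an element of `ℕ∞`. -/
noncomputable def mV {d : ℕ} (I : InstrField d) (V : Set (Site d)) (η : Config d) (h : Odom d)
    (x : Site d) : ℕ∞ :=
  ⨆ (β : List (Site d)) (_ : (∀ y ∈ β, y ∈ V) ∧ LegalSeq I β (η, h)), (β.count x : ℕ∞)

/-- `m_{η,h} = m_{ℤ^d,η,h}`. -/
noncomputable def mFull {d : ℕ} (I : InstrField d) (η : Config d) (h : Odom d) :
    Site d → ℕ∞ :=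
  mV I Set.univ η h

/-- The zero odometer. -/
def zeroOdom (d : ℕ) : Odom d := fun _ => 0

/-- `η` is `I`-stabilizable: `m_{η;I}(x) < ∞` for every `x`. -/
def Stabilizable {d : ℕ} (I : InstrField d) (η : Config d) : Prop :=
  ∀ x : Site d, mFull I η (zeroOdom d) x < ⊤

/-- `η` is `I`-explosive: `m_{η;I}(x) = ∞` for every `x`. -/
def Explosive {d : ℕ} (I : InstrField d) (η : Config d) : Prop :=
  ∀ x : Site d, mFull I η (zeroOdom d) x = ⊤



/-! ### Auxiliary lemmas for the Least Action Principle -/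

/-- A rank function into `ℕ` realizing the same order. -/
def NS.rank : NS → ℕ
  | .nat n => 2 * n
  | .s => 1

lemma NS.le_def (a b : NS) : a ≤ b ↔ a.val ≤ b.val := Iff.rfl

lemma NS.le_iff_rank (a b : NS) : a ≤ b ↔ a.rank ≤ b.rank := by
  cases a with
  | nat n =>
    cases b with
    | nat m =>
      rw [le_def]; simp only [NS.val, NS.rank]
      constructor
      · intro hq; have : n ≤ m := by exact_mod_cast hq
        omega
      · intro hq; have : n ≤ m := by omega
        exact_mod_cast this
    | s =>
      rw [le_def]; simp only [NS.val, NS.rank]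
      constructor
      · intro hq
        have : (n : ℚ) ≤ 1/2 := hq
        have hn : n = 0 := by
          by_contra hn0
          have : (1 : ℚ) ≤ (n : ℚ) := by exact_mod_cast Nat.one_le_iff_ne_zero.mpr hn0
          linarith
        omega
      · intro hq
        have : n = 0 := by omega
        subst this; norm_num
  | s =>
    cases b with
    | nat m =>
      rw [le_def]; simp only [NS.val, NS.rank]
      constructor
      · intro hq
        have hm : m ≠ 0 := by
          rintro rfl; norm_num at hq
        omega
      · intro hq
        have : 1 ≤ m := by omega
        have : (1 : ℚ) ≤ (m : ℚ) := by exact_mod_cast this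
        linarith
    | s => simp [le_def]

lemma NS.one_le_ne_zero {v : NS} (h : NS.nat 1 ≤ v) : v ≠ .nat 0 := by
  rintro rfl
  rw [NS.le_iff_rank] at h
  simp [NS.rank] at h

lemma NS.dec_mono {v w : NS} (h : v ≤ w) : v.dec ≤ w.dec := by
  rw [NS.le_iff_rank] at *
  rcases v with (_ | n) | - <;> rcases w with (_ | m) | - <;>
    simp [NS.dec, NS.rank] at * <;> omega

lemma NS.inc_mono {v w : NS} (h : v ≤ w) : v.inc ≤ w.inc := by
  rw [NS.le_iff_rank] at *
  rcases v with n | - <;> rcases w with m | - <;>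
    simp [NS.inc, NS.rank] at * <;> omega

lemma NS.mulS_mono {v w : NS} (h : v ≤ w) : v.mulS ≤ w.mulS := by
  rw [NS.le_iff_rank] at *
  rcases v with (_ | _ | n) | - <;> rcases w with (_ | _ | m) | - <;>
    simp [NS.mulS, NS.rank] at * <;> omega

lemma NS.one_le_inc (v : NS) : NS.nat 1 ≤ v.inc := by
  rw [NS.le_iff_rank]
  rcases v with n | - <;> simp [NS.inc, NS.rank]

lemma NS.inc_ne_zero (v : NS) : v.inc ≠ .nat 0 := by
  rcases v with n | - <;> simp [NS.inc]

lemma NS.dec_inc_comm (v : NS) (h : v ≠ .nat 0) : v.inc.dec = v.dec.inc := by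
  rcases v with (_ | n) | - <;> simp_all [NS.inc, NS.dec]

lemma NS.mulS_inc_comm (v : NS) (h : v ≠ .nat 0) : v.inc.mulS = v.mulS.inc := by
  rcases v with (_ | _ | n) | - <;> simp_all [NS.inc, NS.mulS]

lemma NS.le_trans' {a b c : NS} (h1 : a ≤ b) (h2 : b ≤ c) : a ≤ c := by
  rw [NS.le_iff_rank] at *; omega

/-- Pointwise form of `applyInstr` for a sleep instruction. -/
lemma applyInstr_sleep_apply {d : ℕ} (x : Site d) (η : Config d) (w : Site d) :
    applyInstr x .sleep η w = if w = x then (η x).mulS else η w := by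
  simp [applyInstr, Function.update_apply]

/-- Applying an instruction at `x` does not decrease the configuration elsewhere:
at `w ≠ x`, the value is either unchanged or incremented. -/
lemma applyInstr_ne {d : ℕ} (x : Site d) (ι : Instr d) (η : Config d) (w : Site d)
    (hw : w ≠ x) :
    applyInstr x ι η w = η w ∨ applyInstr x ι η w = (η w).inc := by
  cases ι with
  | sleep => left; rw [applyInstr_sleep_apply, if_neg hw]
  | move z hz =>
    simp only [applyInstr, if_neg hw]
    by_cases h : w = x + z
    · right; rw [if_pos h, h]
    · left; rw [if_neg h]

lemma applyInstr_mono {d : ℕ} (x : Site d) (ι : Instr d) (η ηb : Config d)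
    (hle : ∀ w, η w ≤ ηb w) : ∀ w, applyInstr x ι η w ≤ applyInstr x ι ηb w := by
  intro w
  cases ι with
  | sleep =>
    rw [applyInstr_sleep_apply, applyInstr_sleep_apply]
    split_ifs
    · exact NS.mulS_mono (hle x)
    · exact hle w
  | move z hz =>
    simp only [applyInstr]
    split_ifs
    · exact NS.dec_mono (hle x)
    · exact NS.inc_mono (hle (x + z))
    · exact hle w

/-- Toppling a site `y ≠ b` preserves `η(b) ≥ 1`. -/
lemma topple_preserves_one_le {d : ℕ} (I : InstrField d) (y b : Site d) (hyb : b ≠ y)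
    (s : Config d × Odom d) (hb : NS.nat 1 ≤ s.1 b) :
    NS.nat 1 ≤ (topple I y s).1 b := by
  rcases applyInstr_ne y (I y (s.2 y + 1)) s.1 b hyb with h | h
  · rw [topple]; simpa [h] using hb
  · rw [topple]; simp only [h]; exact NS.one_le_inc _

set_option maxHeartbeats 2000000 in
/-- Acceptable instructions at distinct sites commute (on configurations). -/
lemma applyInstr_comm {d : ℕ} (x y : Site d) (hxy : x ≠ y) (ι1 ι2 : Instr d)
    (η : Config d) (hx : η x ≠ .nat 0) (hy : η y ≠ .nat 0) :
    applyInstr x ι1 (applyInstr y ι2 η) = applyInstr y ι2 (applyInstr x ι1 η) := by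
  funext w
  cases ι1 <;> cases ι2 <;>
    · simp only [applyInstr, Function.update_apply]
      split_ifs <;> subst_vars <;>
        try (rename_i heq; first | rw [heq] | rw [← heq])
      all_goals
        first
        | rfl
        | exact absurd rfl (by assumption)
        | exact absurd (left_eq_add.mp (by assumption)) (by assumption)
        | exact absurd (add_eq_left.mp (by assumption)) (by assumption)
        | exact NS.dec_inc_comm _ (by assumption)
        | exact (NS.dec_inc_comm _ (by assumption)).symm
        | exact NS.mulS_inc_comm _ (by assumption)
        | exact (NS.mulS_inc_comm _ (by assumption)).symm
        | grind

/-- Acceptable topplings at distinct sites commute. -/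
lemma topple_comm {d : ℕ} (I : InstrField d) (x y : Site d) (hxy : x ≠ y)
    (s : Config d × Odom d) (hx : s.1 x ≠ .nat 0) (hy : s.1 y ≠ .nat 0) :
    topple I x (topple I y s) = topple I y (topple I x s) := by
  obtain ⟨η, h⟩ := s
  simp only [topple, Function.update_apply, if_neg hxy, if_neg (Ne.symm hxy),
    Function.update_of_ne hxy, Function.update_of_ne (Ne.symm hxy), Prod.mk.injEq]
  exact ⟨applyInstr_comm x y hxy _ _ η hx hy, (Function.update_comm hxy _ _ _).symm⟩

/-- If `b` is never toppled along `α`, then `η(b) ≥ 1` is preserved. -/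
lemma toppleSeq_preserves_one_le {d : ℕ} (I : InstrField d) (b : Site d) :
    ∀ (α : List (Site d)) (s : Config d × Odom d), b ∉ α → NS.nat 1 ≤ s.1 b →
      NS.nat 1 ≤ (toppleSeq I α s).1 b := by
  intro α
  induction α with
  | nil => intro s _ hb; exact hb
  | cons y γ ih =>
    intro s hbα hb
    have hby : b ≠ y := fun hc => hbα (by simp [hc])
    have hbγ : b ∉ γ := fun hc => hbα (List.mem_cons_of_mem _ hc)
    exact ih _ hbγ (topple_preserves_one_le I y b hby s hb)

/-- Acceptability at `y` is preserved by toppling a different site. -/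
lemma acceptableAt_topple {d : ℕ} (I : InstrField d) (x y : Site d) (hxy : y ≠ x)
    (s : Config d × Odom d) (hy : s.1 y ≠ .nat 0) : (topple I x s).1 y ≠ .nat 0 := by
  rcases applyInstr_ne x (I x (s.2 x + 1)) s.1 y hxy with h | h
  · rw [topple]; simpa [h] using hy
  · rw [topple]; simp only [h]; exact NS.inc_ne_zero _

/-- A first occurrence of a sufficiently charged site in an acceptable sequence can be
moved to the front without changing the outcome. -/
lemma acceptable_move_front {d : ℕ} (I : InstrField d) (b : Site d) :
    ∀ (γ δ : List (Site d)) (s : Config d × Odom d), b ∉ γ → NS.nat 1 ≤ s.1 b →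
      AcceptableSeq I (γ ++ b :: δ) s →
      AcceptableSeq I (b :: (γ ++ δ)) s ∧
        toppleSeq I (b :: (γ ++ δ)) s = toppleSeq I (γ ++ b :: δ) s := by
  intro γ
  induction γ with
  | nil => intro δ s _ _ hacc; exact ⟨hacc, rfl⟩
  | cons y γ' ih =>
    intro δ s hbγ hb hacc
    have hby : b ≠ y := fun hc => hbγ (by simp [hc])
    have hbγ' : b ∉ γ' := fun hc => hbγ (List.mem_cons_of_mem _ hc)
    rcases hacc with _ | ⟨hy, htail⟩
    have hb' : NS.nat 1 ≤ (topple I y s).1 b :=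
      topple_preserves_one_le I y b hby s hb
    obtain ⟨hacc', heq'⟩ := ih δ (topple I y s) hbγ' hb' htail
    rcases hacc' with _ | ⟨hbacc, hrest⟩
    have hswap : topple I b (topple I y s) = topple I y (topple I b s) :=
      topple_comm I b y hby _ (NS.one_le_ne_zero hb) hy
    refine ⟨?_, ?_⟩
    · refine AcceptableSeq.cons (NS.one_le_ne_zero hb) ?_
      refine AcceptableSeq.cons (acceptableAt_topple I b y (Ne.symm hby) _ hy) ?_
      rw [← hswap]
      exact hrest
    · show toppleSeq I (γ' ++ δ) (topple I y (topple I b s)) = _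
      rw [← hswap]
      exact heq'

/-- In an acceptable stabilizing sequence, every site of `V` that starts `≥ 1`
must be toppled. -/
lemma mem_of_unstable {d : ℕ} (I : InstrField d) (V : Set (Site d)) (b : Site d)
    (hbV : b ∈ V) (α : List (Site d)) (s : Config d × Odom d)
    (hstab : StableIn (toppleSeq I α s).1 V) (hb : NS.nat 1 ≤ s.1 b) : b ∈ α := by
  by_contra hbα
  exact hstab b hbV (toppleSeq_preserves_one_le I b α s hbα hb)

/-- Splitting off the first occurrence. -/
lemma exists_split_first {d : ℕ} {b : Site d} :
    ∀ {α : List (Site d)}, b ∈ α → ∃ γ δ, α = γ ++ b :: δ ∧ b ∉ γ := by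
  intro α
  induction α with
  | nil => intro h; simp at h
  | cons y γ' ih =>
    intro h
    by_cases hyb : y = b
    · exact ⟨[], γ', by simp [hyb], by simp⟩
    · have hb : b ∈ γ' := by
        rcases List.mem_cons.mp h with h' | h'
        · exact absurd h'.symm hyb
        · exact h'
      obtain ⟨γ, δ, h1, h2⟩ := ih hb
      exact ⟨y :: γ, δ, by simp [h1], by
        simp only [List.mem_cons, not_or]
        exact ⟨fun hc => hyb hc.symm, h2⟩⟩

/-- Key inductive form of the least action principle. -/
lemma key_lap {d : ℕ} (I : InstrField d) (V : Set (Site d)) :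
    ∀ (β : List (Site d)) (η : Config d) (h : Odom d), LegalSeq I β (η, h) →
      (∀ y ∈ β, y ∈ V) → ∀ (α : List (Site d)) (ηb : Config d),
      (∀ x, η x ≤ ηb x) → AcceptableSeq I α (ηb, h) →
      StableIn (toppleSeq I α (ηb, h)).1 V →
      ∀ x, β.count x ≤ α.count x := by
  intro β
  induction β with
  | nil => intro _ _ _ _ _ _ _ _ _ _; simp
  | cons b β' ih =>
    intro η h hleg hβV α ηb hle hacc hstab x
    rcases hleg with _ | ⟨hbun, hleg'⟩
    have hbV : b ∈ V := hβV b (by simp)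
    have hbun' : NS.nat 1 ≤ ηb b := NS.le_trans' hbun (hle b)
    have hbα : b ∈ α := mem_of_unstable I V b hbV α (ηb, h) hstab hbun'
    obtain ⟨γ, δ, rfl, hbγ⟩ := exists_split_first hbα
    obtain ⟨hacc2, heq2⟩ := acceptable_move_front I b γ δ (ηb, h) hbγ hbun' hacc
    rcases hacc2 with _ | ⟨-, hacc3⟩
    -- after toppling b, configurations stay ordered and odometers agree
    have hle' : ∀ w, (topple I b (η, h)).1 w ≤ (topple I b (ηb, h)).1 w :=
      applyInstr_mono b _ η ηb hle
    have hodo : (topple I b (η, h)).2 = (topple I b (ηb, h)).2 := rfl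
    have hstab' : StableIn (toppleSeq I (γ ++ δ) (topple I b (ηb, h))).1 V := by
      have : toppleSeq I (γ ++ δ) (topple I b (ηb, h))
          = toppleSeq I (γ ++ b :: δ) (ηb, h) := heq2
      rw [this]; exact hstab
    have hcount : ∀ w, β'.count w ≤ (γ ++ δ).count w := by
      intro w
      exact ih (topple I b (η, h)).1 (topple I b (η, h)).2 hleg'
        (fun y hy => hβV y (List.mem_cons_of_mem _ hy)) (γ ++ δ)
        (topple I b (ηb, h)).1 hle' (by rw [hodo] at *; exact hacc3)
        (by rw [hodo] at *; exact hstab') w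
    have h1 : β'.count x ≤ γ.count x + δ.count x := by
      simpa [List.count_append] using hcount x
    by_cases hbx : b = x <;>
      · simp only [List.count_cons, List.count_append, hbx, beq_iff_eq, if_true, if_false,
          beq_self_eq_true]
        first | omega | (split_ifs <;> omega)

/-- **Least Action Principle with a larger configuration**: if `η ≤ η̄` pointwise and `α`
is an acceptable sequence of topplings for `(η̄,h)` whose result is stable in `V`, then
`m_{V,η,h} ≤ m_α`. -/
theorem least_action_principle_mono {d : ℕ} (I : InstrField d) (h : Odom d)
    (V : Set (Site d)) (η ηb : Config d) (hle : ∀ x : Site d, η x ≤ ηb x)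
    (α : List (Site d))
    (hα : AcceptableSeq I α (ηb, h))
    (hstab : StableIn (toppleSeq I α (ηb, h)).1 V) :
    ∀ x : Site d, mV I V η h x ≤ (α.count x : ℕ∞) := by
  intro x
  refine iSup_le fun β => iSup_le fun hβ => ?_
  exact_mod_cast Nat.cast_le.mpr
    (key_lap I V β η h hβ.2 hβ.1 α ηb hle hα hstab x)

end ARW
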